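/- Let Π be a bounded projection on a Hilbert space H (i.e. Π² = Π). Then the orthogonal projection Π₀ onto (ker Π)^⊥ satisfies Π₀ = Π* ∘ (Id − Π + Π*)⁻¹; in particular ker Π₀ = ker Π. -/

import Mathlib

open ContinuousLinearMap

local notation "⟪" x ", " y "⟫" => @inner ℂ _ _ x y

/-- Let `Π` be a bounded projection on a Hilbert space `H` (`Π² = Π`).
Then the orthogonal projection `Π₀` onto `(ker Π)ᗮ` (characterized as the self-adjoint
idempotent with range `(ker Π)ᗮ`) satisfies `Π₀ = Π* ∘ (Id − Π + Π*)⁻¹`;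
in particular `ker Π₀ = ker Π`. -/
theorem statement1 {H : Type*}
    [NormedAddCommGroup H] [InnerProductSpace ℂ H] [CompleteSpace H]
    (Q : H →L[ℂ] H) (hQ : Q ∘L Q = Q)
    (P₀ : H →L[ℂ] H) (hP₀sa : IsSelfAdjoint P₀) (hP₀idem : P₀ ∘L P₀ = P₀)
    (hP₀range : LinearMap.range (P₀ : H →ₗ[ℂ] H) = (LinearMap.ker (Q : H →ₗ[ℂ] H))ᗮ) :
    ∃ T : H →L[ℂ] H,
      ((1 : H →L[ℂ] H) - Q + ContinuousLinearMap.adjoint Q) ∘L T = 1 ∧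
      T ∘L ((1 : H →L[ℂ] H) - Q + ContinuousLinearMap.adjoint Q) = 1 ∧
      P₀ = ContinuousLinearMap.adjoint Q ∘L T ∧
      LinearMap.ker (P₀ : H →ₗ[ℂ] H) = LinearMap.ker (Q : H →ₗ[ℂ] H) := by
  set Qs := ContinuousLinearMap.adjoint Q with hQs
  set A : H →L[ℂ] H := 1 - Q + Qs with hA
  set B : H →L[ℂ] H := 1 + Q - Qs with hB
  have hP₀ : ∀ x y : H, ⟪P₀ x, y⟫ = ⟪x, P₀ y⟫ := by
    intro x y
    have h : ContinuousLinearMap.adjoint P₀ = P₀ := hP₀sa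
    conv_lhs => rw [← h]
    exact adjoint_inner_left P₀ y x
  -- ⟪A x, y⟫ = ⟪x, B y⟫
  have hAB : ∀ x y : H, ⟪A x, y⟫ = ⟪x, B y⟫ := by
    intro x y
    simp only [hA, hB, add_apply, sub_apply, one_apply_eq_self, inner_add_left, inner_sub_left,
      inner_add_right, inner_sub_right, hQs, adjoint_inner_left, adjoint_inner_right]
    ring
  -- real part computations
  have hreA : ∀ x : H, Complex.re ⟪A x, x⟫ = ‖x‖ ^ 2 := by
    intro x
    simp only [hA, add_apply, sub_apply, one_apply_eq_self, inner_add_left, inner_sub_left, hQs,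
      adjoint_inner_left]
    rw [← inner_conj_symm (Q x) x]
    have h0 : (⟪x, x⟫ : ℂ) = (‖x‖ : ℂ) ^ 2 := inner_self_eq_norm_sq_to_K x
    have h1 : (⟪x, Q x⟫ : ℂ).re = (⟪Q x, x⟫ : ℂ).re := by
      rw [← inner_conj_symm (Q x) x, Complex.conj_re]
    have h2 : ((‖x‖ : ℂ) ^ 2).re = ‖x‖ ^ 2 := by norm_cast
    simp only [h0]
    simp
    linarith [h1, h2]
  have hreB : ∀ x : H, Complex.re ⟪B x, x⟫ = ‖x‖ ^ 2 := by
    intro x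
    simp only [hB, add_apply, sub_apply, one_apply_eq_self, inner_add_left, inner_sub_left, hQs,
      adjoint_inner_left]
    rw [← inner_conj_symm (Q x) x]
    have h0 : (⟪x, x⟫ : ℂ) = (‖x‖ : ℂ) ^ 2 := inner_self_eq_norm_sq_to_K x
    have h1 : (⟪x, Q x⟫ : ℂ).re = (⟪Q x, x⟫ : ℂ).re := by
      rw [← inner_conj_symm (Q x) x, Complex.conj_re]
    have h2 : ((‖x‖ : ℂ) ^ 2).re = ‖x‖ ^ 2 := by norm_cast
    simp only [h0]
    simp
    linarith [h1, h2]
  have key : ∀ (C : H →L[ℂ] H), (∀ x : H, Complex.re ⟪C x, x⟫ = ‖x‖ ^ 2) →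
      ∀ x : H, ‖x‖ ≤ ‖C x‖ := by
    intro C hC x
    rcases eq_or_ne x 0 with rfl | hx
    · simp
    have h1 : ‖x‖ ^ 2 ≤ ‖C x‖ * ‖x‖ := by
      rw [← hC x]
      calc Complex.re ⟪C x, x⟫ ≤ ‖(⟪C x, x⟫ : ℂ)‖ := Complex.re_le_norm _
        _ ≤ ‖C x‖ * ‖x‖ := norm_inner_le_norm _ _
    have hxpos : 0 < ‖x‖ := norm_pos_iff.mpr hx
    nlinarith
  have hinjA : ∀ x : H, A x = 0 → x = 0 := by
    intro x hx
    have := hreA x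
    rw [hx] at this
    simp at this
    have hn : ‖x‖ = 0 := by nlinarith [norm_nonneg x]
    exact norm_eq_zero.mp hn
  have hinjB : ∀ x : H, B x = 0 → x = 0 := by
    intro x hx
    have := hreB x
    rw [hx] at this
    simp at this
    have hn : ‖x‖ = 0 := by nlinarith [norm_nonneg x]
    exact norm_eq_zero.mp hn
  -- A injective
  have hkerA : LinearMap.ker (A : H →ₗ[ℂ] H) = ⊥ := by
    rw [LinearMap.ker_eq_bot']
    intro x hx
    exact hinjA x hx
  -- A has closed range
  have hanti : AntilipschitzWith 1 A := by
    apply ContinuousLinearMap.antilipschitz_of_bound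
    intro x
    simpa using key A hreA x
  have hclosed : IsClosed (LinearMap.range (A : H →ₗ[ℂ] H) : Set H) := by
    have := hanti.isClosed_range A.uniformContinuous
    simpa [Set.range, LinearMap.coe_range] using this
  have hrangeA : LinearMap.range (A : H →ₗ[ℂ] H) = ⊤ := by
    haveI : CompleteSpace (LinearMap.range (A : H →ₗ[ℂ] H)) := hclosed.completeSpace_coe
    rw [← Submodule.orthogonal_eq_bot_iff]
    rw [Submodule.eq_bot_iff]
    intro y hy
    apply hinjB
    have h1 : ∀ x : H, ⟪x, B y⟫ = 0 := by
      intro x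
      rw [← hAB]
      exact (Submodule.mem_orthogonal _ _).mp hy (A x) (LinearMap.mem_range_self _ x)
    have := h1 (B y)
    rwa [inner_self_eq_zero] at this
  set e := ContinuousLinearEquiv.ofBijective A hkerA hrangeA with he
  have hcoe : ⇑e = ⇑A := ContinuousLinearEquiv.coeFn_ofBijective A hkerA hrangeA
  have hAe : ∀ x : H, A (e.symm x) = x := fun x => by
    calc A (e.symm x) = e (e.symm x) := (congrFun hcoe _).symm
      _ = x := e.apply_symm_apply x
  have heA : ∀ x : H, e.symm (A x) = x := fun x => by
    calc e.symm (A x) = e.symm (e x) := by rw [congrFun hcoe x]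
      _ = x := e.symm_apply_apply x
  -- Q is idempotent pointwise
  have hQQ : ∀ x : H, Q (Q x) = Q x := by
    intro x
    conv_rhs => rw [← hQ]
    rfl
  have hclosedKerQ : IsClosed (LinearMap.ker (Q : H →ₗ[ℂ] H) : Set H) := ContinuousLinearMap.isClosed_ker Q
  haveI : CompleteSpace (LinearMap.ker (Q : H →ₗ[ℂ] H)) := hclosedKerQ.completeSpace_coe
  -- ker P₀ = ker Q
  have hker : LinearMap.ker (P₀ : H →ₗ[ℂ] H) = LinearMap.ker (Q : H →ₗ[ℂ] H) := by
    have h1 : LinearMap.ker (P₀ : H →ₗ[ℂ] H) = (LinearMap.range (P₀ : H →ₗ[ℂ] H))ᗮ := by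
      ext x
      simp only [LinearMap.mem_ker, Submodule.mem_orthogonal, ContinuousLinearMap.coe_coe]
      constructor
      · intro hx u hu
        obtain ⟨z, rfl⟩ := hu
        rw [ContinuousLinearMap.coe_coe, hP₀, hx, inner_zero_right]
      · intro hx
        have h2 : (⟪P₀ x, P₀ x⟫ : ℂ) = 0 := by
          rw [hP₀]
          have h3 : P₀ (P₀ x) = P₀ x := by
            conv_rhs => rw [← hP₀idem]
            rfl
          rw [h3]
          have h4 := hx (P₀ x) (LinearMap.mem_range_self _ x)
          rw [← inner_conj_symm, h4, map_zero]
        exact inner_self_eq_zero.mp h2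
    rw [h1, hP₀range, Submodule.orthogonal_orthogonal]
  -- Qs fixes (ker Q)ᗮ
  have hQsfix : ∀ v : H, v ∈ (LinearMap.ker (Q : H →ₗ[ℂ] H))ᗮ → Qs v = v := by
    intro v hv
    have h1 : ∀ x : H, (⟪x, v - Qs v⟫ : ℂ) = 0 := by
      intro x
      have hm : x - Q x ∈ LinearMap.ker (Q : H →ₗ[ℂ] H) := by
        simp [LinearMap.mem_ker, map_sub, hQQ x]
      have h2 := (Submodule.mem_orthogonal _ v).mp hv (x - Q x) hm
      rw [inner_sub_right, hQs, adjoint_inner_right, ← inner_sub_left]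
      exact h2
    have h3 := h1 (v - Qs v)
    rw [inner_self_eq_zero, sub_eq_zero] at h3
    exact h3.symm
  -- P₀ fixes (ker Q)ᗮ
  have hP₀fix : ∀ v : H, v ∈ (LinearMap.ker (Q : H →ₗ[ℂ] H))ᗮ → P₀ v = v := by
    intro v hv
    rw [← hP₀range] at hv
    obtain ⟨w, rfl⟩ := hv
    conv_rhs => rw [← hP₀idem]
    rfl
  -- B ∘ P₀ = Q pointwise
  have hBP : ∀ y : H, B (P₀ y) = Q y := by
    intro y
    obtain ⟨u, hu, v, hv, rfl⟩ := Submodule.exists_add_mem_mem_orthogonal (K := LinearMap.ker (Q : H →ₗ[ℂ] H)) y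
    have hPu : P₀ u = 0 := by
      have : u ∈ LinearMap.ker (P₀ : H →ₗ[ℂ] H) := by rw [hker]; exact hu
      exact this
    have hPv : P₀ v = v := hP₀fix v hv
    have hQu : Q u = 0 := hu
    simp only [map_add, hPu, hPv, zero_add, hQu]
    simp only [hB, add_apply, sub_apply, one_apply_eq_self, hQsfix v hv]
    abel
  -- P₀ ∘L A = Qs
  have hPA : P₀ ∘L A = Qs := by
    ext x
    refine ext_inner_right ℂ fun v => ?_
    rw [comp_apply, hP₀, hAB, hBP v]
    exact (adjoint_inner_left Q v x).symm
  refine ⟨(e.symm : H →L[ℂ] H), ?_, ?_, ?_, hker⟩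
  · ext x
    simp only [comp_apply, one_apply_eq_self, ContinuousLinearEquiv.coe_coe]
    exact hAe x
  · ext x
    simp only [comp_apply, one_apply_eq_self, ContinuousLinearEquiv.coe_coe]
    exact heA x
  · ext x
    have h1 := DFunLike.congr_fun hPA (e.symm x)
    simp only [comp_apply, ContinuousLinearEquiv.coe_coe] at h1 ⊢
    rw [← h1, hAe x]
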